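/- Under the assumption σ̄ = lim_{t→0⁺}(𝔡(t)/Q(t))^{1/2} = ∞, for every s ≥ 0 one has g(s) ≤ ĝ(s), where ĝ(s) := inf_{x∈(0,1]} { 2(Ψ(1) − Ψ(1−x)) + ( φ'(0⁺)·f̂(1−x)·𝔡(x)/Q(x) )^{1/2}·s }. Moreover ĝ is concave, non-decreasing, continuous, ĝ(s) ≤ 2Ψ(1), and lim_{s→0⁺} ĝ(s)/s = ∞. -/

import Mathlib

open Set Filter Topology MeasureTheory intervalIntegral

/-- `u ∈ H¹((0,1))` represented via an a.e. derivative `u′`: `u′ ∈ L²(0,1)` and `u` is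
the integral of `u′` (absolute continuity / FTC representation). -/
def H1on01 (u u₁ : ℝ → ℝ) : Prop :=
  MemLp u₁ 2 (volume.restrict (Ioo (0:ℝ) 1)) ∧
  IntervalIntegrable u₁ volume 0 1 ∧
  ∀ x ∈ Icc (0:ℝ) 1, u x = u 0 + ∫ s in (0:ℝ)..x, u₁ s

/-- `Ψ(t) = ∫₀ᵗ 𝔡(1−τ)^{1/2} dτ`. -/
noncomputable def Psi (dd : ℝ → ℝ) (t : ℝ) : ℝ := ∫ τ in (0:ℝ)..t, Real.sqrt (dd (1 - τ))

/-- `f(t) = (f̂(t)/Q(1−t))^{1/2}`. -/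
noncomputable def fdeg (fhat Q : ℝ → ℝ) (t : ℝ) : ℝ := Real.sqrt (fhat t / Q (1 - t))

/-- The surface energy density
`g(s) = inf { ∫₀¹ (𝔡(1−β)(c f²(β)|γ′|² + |β′|²))^{1/2} : (γ,β) ∈ 𝔘_s }`. -/
noncomputable def surfG (dd fhat Q : ℝ → ℝ) (c : ℝ) (s : ℝ) : ℝ :=
  sInf {y : ℝ | ∃ γ γ₁ β β₁ : ℝ → ℝ,
    H1on01 γ γ₁ ∧ H1on01 β β₁ ∧ γ 0 = 0 ∧ γ 1 = s ∧
    (∀ x ∈ Icc (0:ℝ) 1, β x ∈ Icc (0:ℝ) 1) ∧ β 0 = 1 ∧ β 1 = 1 ∧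
    y = ∫ x in (0:ℝ)..1,
      Real.sqrt (dd (1 - β x) * (c * (fdeg fhat Q (β x))^2 * (γ₁ x)^2 + (β₁ x)^2))}

/-- `ĝ(s) = inf_{x∈(0,1]} { 2(Ψ(1)−Ψ(1−x)) + (c·f̂(1−x)·𝔡(x)/Q(x))^{1/2}·s }`. -/
noncomputable def ghat (dd fhat Q : ℝ → ℝ) (c s : ℝ) : ℝ :=
  sInf {y : ℝ | ∃ x ∈ Ioc (0:ℝ) 1,
    y = 2*(Psi dd 1 - Psi dd (1-x)) + Real.sqrt (c * fhat (1-x) * (dd x / Q x)) * s}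

/- ### Auxiliary lemmas -/

lemma psi_diff (dd : ℝ → ℝ) (hdc : ContinuousOn dd (Icc 0 1)) {x : ℝ} (hx : x ∈ Icc (0:ℝ) 1) :
    Psi dd 1 - Psi dd (1-x) = ∫ u in (0:ℝ)..x, Real.sqrt (dd u) := by
  obtain ⟨hx0, hx1⟩ := hx
  have hcont : ContinuousOn (fun τ : ℝ => Real.sqrt (dd (1 - τ))) (Icc 0 1) := by
    apply Real.continuous_sqrt.comp_continuousOn
    exact hdc.comp (continuous_const.sub continuous_id).continuousOn
      (fun τ hτ => ⟨by simp; linarith [hτ.2], by simp; linarith [hτ.1]⟩)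
  have h1 : IntervalIntegrable (fun τ : ℝ => Real.sqrt (dd (1 - τ))) volume 0 (1-x) := by
    apply (hcont.mono ?_).intervalIntegrable
    rw [uIcc_of_le (by linarith)]
    exact Icc_subset_Icc le_rfl (by linarith)
  have h2 : IntervalIntegrable (fun τ : ℝ => Real.sqrt (dd (1 - τ))) volume (1-x) 1 := by
    apply (hcont.mono ?_).intervalIntegrable
    rw [uIcc_of_le (by linarith)]
    exact Icc_subset_Icc (by linarith) le_rfl
  have hsplit := integral_add_adjacent_intervals h1 h2
  have : Psi dd 1 - Psi dd (1-x) = ∫ τ in (1-x)..1, Real.sqrt (dd (1 - τ)) := by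
    unfold Psi; linarith [hsplit]
  rw [this, integral_comp_sub_left (fun u => Real.sqrt (dd u)) 1]
  norm_num

lemma h1_of_step {a b C1 C2 C3 : ℝ} (hab : 0 < a) (hab2 : a < b)
    (u0 : ℝ)
    (u₁ : ℝ → ℝ) (hu₁ : u₁ = fun t => if t < a then C1 else if t < b then C2 else C3) :
    H1on01 (fun t => if t ≤ a then u0 + C1*t else if t ≤ b then u0 + C1*a + C2*(t-a)
      else u0 + C1*a + C2*(b-a) + C3*(t-b)) u₁ := by
  subst hu₁
  set u₁ : ℝ → ℝ := fun t => if t < a then C1 else if t < b then C2 else C3 with hu₁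
  have hm : Measurable u₁ := by
    refine Measurable.ite measurableSet_Iio measurable_const ?_
    exact Measurable.ite measurableSet_Iio measurable_const measurable_const
  have hbd : ∀ t, |u₁ t| ≤ max |C1| (max |C2| |C3|) := by
    intro t
    simp only [u₁]
    split_ifs
    · exact le_max_left _ _
    · exact le_trans (le_max_left _ _) (le_max_right _ _)
    · exact le_trans (le_max_right _ _) (le_max_right _ _)
  have hint : ∀ p q : ℝ, IntervalIntegrable u₁ volume p q := by
    intro p q
    rw [intervalIntegrable_iff]
    refine Integrable.mono' (integrableOn_const (C := max |C1| (max |C2| |C3|)) measure_Ioc_lt_top.ne)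
      hm.aestronglyMeasurable.restrict (ae_of_all _ fun t => by
        rw [Real.norm_eq_abs]; exact hbd t)
  have hnea : ∀ᵐ τ : ℝ ∂volume, τ ≠ a := compl_mem_ae_iff.mpr (measure_singleton _)
  have hneb : ∀ᵐ τ : ℝ ∂volume, τ ≠ b := compl_mem_ae_iff.mpr (measure_singleton _)
  have I1 : ∀ t, 0 ≤ t → t ≤ a → (∫ τ in (0:ℝ)..t, u₁ τ) = C1*t := by
    intro t h0 ha
    rw [intervalIntegral.integral_congr_ae (g := fun _ => C1) ?_,
      intervalIntegral.integral_const, smul_eq_mul]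
    · ring
    · filter_upwards [hnea] with τ hτ hmem
      rw [uIoc_of_le h0] at hmem
      have : τ < a := lt_of_le_of_ne (le_trans hmem.2 ha) hτ
      simp [u₁, this]
  have I2 : ∀ t, a ≤ t → t ≤ b → (∫ τ in a..t, u₁ τ) = C2*(t-a) := by
    intro t h0 hb
    rw [intervalIntegral.integral_congr_ae (g := fun _ => C2) ?_,
      intervalIntegral.integral_const, smul_eq_mul]
    · ring
    · filter_upwards [hneb] with τ hτ hmem
      rw [uIoc_of_le h0] at hmem
      have h1 : ¬ τ < a := not_lt.2 hmem.1.le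
      have h2 : τ < b := lt_of_le_of_ne (le_trans hmem.2 hb) hτ
      simp [u₁, h1, h2]
  have I3 : ∀ t, b ≤ t → (∫ τ in b..t, u₁ τ) = C3*(t-b) := by
    intro t hbt
    rw [integral_congr (g := fun _ => C3) ?_, intervalIntegral.integral_const, smul_eq_mul]
    · ring
    · intro τ hmem
      rw [uIcc_of_le hbt] at hmem
      have h1 : ¬ τ < a := not_lt.2 (le_trans (by linarith) hmem.1)
      have h2 : ¬ τ < b := not_lt.2 hmem.1
      simp [u₁, h1, h2]
  refine ⟨?_, hint 0 1, ?_⟩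
  · haveI : IsFiniteMeasure (volume.restrict (Ioo (0:ℝ) 1)) := by
      constructor; rw [Measure.restrict_apply_univ]; simp [Real.volume_Ioo]
    exact MemLp.of_bound hm.aestronglyMeasurable _ (Eventually.of_forall (fun t => by
      rw [Real.norm_eq_abs]; exact hbd t))
  · intro t ht
    obtain ⟨ht0, ht1⟩ := ht
    have hval0 : (if (0:ℝ) ≤ a then u0 + C1*0 else if (0:ℝ) ≤ b then u0 + C1*a + C2*(0-a)
      else u0 + C1*a + C2*(b-a) + C3*(0-b)) = u0 := by
      rw [if_pos hab.le]; ring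
    simp only [hval0]
    by_cases h1 : t ≤ a
    · rw [if_pos h1, I1 t ht0 h1]
    · push_neg at h1
      have hsplit1 : (∫ τ in (0:ℝ)..t, u₁ τ) = (∫ τ in (0:ℝ)..a, u₁ τ) + ∫ τ in a..t, u₁ τ :=
        (integral_add_adjacent_intervals (hint 0 a) (hint a t)).symm
      by_cases h2 : t ≤ b
      · rw [if_neg (not_le.2 h1), if_pos h2, hsplit1, I1 a hab.le le_rfl, I2 t h1.le h2]
        ring
      · push_neg at h2
        have hsplit2 : (∫ τ in a..t, u₁ τ) = (∫ τ in a..b, u₁ τ) + ∫ τ in b..t, u₁ τ :=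
          (integral_add_adjacent_intervals (hint a b) (hint b t)).symm
        rw [if_neg (not_le.2 h1), if_neg (not_le.2 h2), hsplit1, hsplit2,
          I1 a hab.le le_rfl, I2 b hab2.le le_rfl, I3 t h2.le]
        ring

lemma surfG_bddBelow (dd fhat Q : ℝ → ℝ) (c s : ℝ) :
    BddBelow {y : ℝ | ∃ γ γ₁ β β₁ : ℝ → ℝ,
      H1on01 γ γ₁ ∧ H1on01 β β₁ ∧ γ 0 = 0 ∧ γ 1 = s ∧
      (∀ x ∈ Icc (0:ℝ) 1, β x ∈ Icc (0:ℝ) 1) ∧ β 0 = 1 ∧ β 1 = 1 ∧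
      y = ∫ x in (0:ℝ)..1,
        Real.sqrt (dd (1 - β x) * (c * (fdeg fhat Q (β x))^2 * (γ₁ x)^2 + (β₁ x)^2))} := by
  refine ⟨0, fun y hy => ?_⟩
  obtain ⟨γ, γ₁, β, β₁, _, _, _, _, _, _, _, rfl⟩ := hy
  exact intervalIntegral.integral_nonneg zero_le_one (fun u _ => Real.sqrt_nonneg _)

set_option maxHeartbeats 1000000 in
lemma competitor (dd fhat Q : ℝ → ℝ) (c : ℝ) (hc : 0 < c)
    (hdc : ContinuousOn dd (Icc 0 1))
    (hfnn : ∀ t ∈ Icc (0:ℝ) 1, 0 ≤ fhat t) (hQnn : ∀ t ∈ Icc (0:ℝ) 1, 0 ≤ Q t)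
    (hdnn : ∀ t ∈ Icc (0:ℝ) 1, 0 ≤ dd t)
    {s x : ℝ} (hs : 0 ≤ s) (hx0 : 0 < x) (hx1 : x ≤ 1) :
    surfG dd fhat Q c s ≤
      2*(Psi dd 1 - Psi dd (1-x)) + Real.sqrt (c * fhat (1-x) * (dd x / Q x)) * s := by
  have h13 : (0:ℝ) < 1/3 := by norm_num
  have h23 : (1/3:ℝ) < 2/3 := by norm_num
  -- the competitor profiles
  set β₁ : ℝ → ℝ := fun t => if t < 1/3 then -(3*x) else if t < (2/3:ℝ) then 0 else 3*x
    with hβ₁def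
  set γ₁ : ℝ → ℝ := fun t => if t < 1/3 then 0 else if t < (2/3:ℝ) then 3*s else 0
    with hγ₁def
  set β : ℝ → ℝ := fun t => if t ≤ (1/3:ℝ) then 1 + (-(3*x))*t
    else if t ≤ (2/3:ℝ) then 1 + (-(3*x))*(1/3) + 0*(t-1/3)
    else 1 + (-(3*x))*(1/3) + 0*(2/3-1/3) + (3*x)*(t-2/3) with hβdef
  set γ : ℝ → ℝ := fun t => if t ≤ (1/3:ℝ) then 0 + 0*t
    else if t ≤ (2/3:ℝ) then 0 + 0*(1/3) + (3*s)*(t-1/3)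
    else 0 + 0*(1/3) + (3*s)*(2/3-1/3) + 0*(t-2/3) with hγdef
  have hβH1 : H1on01 β β₁ := h1_of_step h13 h23 1 β₁ hβ₁def
  have hγH1 : H1on01 γ γ₁ := h1_of_step h13 h23 0 γ₁ hγ₁def
  have hβ0 : β 0 = 1 := by simp [hβdef]
  have hβ1 : β 1 = 1 := by norm_num [hβdef]
  have hγ0 : γ 0 = 0 := by simp [hγdef]
  have hγ1 : γ 1 = s := by norm_num [hγdef]; ring
  have hβmem : ∀ t ∈ Icc (0:ℝ) 1, β t ∈ Icc (0:ℝ) 1 := by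
    intro t ⟨ht0, ht1⟩
    simp only [hβdef]
    split_ifs with h1 h2 <;> constructor <;> nlinarith
  -- the energy integrand
  set F : ℝ → ℝ := fun t => Real.sqrt (dd (1 - β t) *
    (c * (fdeg fhat Q (β t))^2 * (γ₁ t)^2 + (β₁ t)^2)) with hFdef
  set K : ℝ := Real.sqrt (c * fhat (1-x) * (dd x / Q x)) with hKdef
  set I : ℝ := ∫ u in (0:ℝ)..x, Real.sqrt (dd u) with hIdef
  have hne13 : ∀ᵐ τ : ℝ ∂volume, τ ≠ (1/3:ℝ) := compl_mem_ae_iff.mpr (measure_singleton _)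
  have hne23 : ∀ᵐ τ : ℝ ∂volume, τ ≠ (2/3:ℝ) := compl_mem_ae_iff.mpr (measure_singleton _)
  -- piece 1
  have hF1 : ∀ᵐ τ : ℝ ∂volume, τ ∈ Set.uIoc (0:ℝ) (1/3) → F τ = Real.sqrt (dd (3*x*τ)) * (3*x) := by
    filter_upwards [hne13] with τ hτ hmem
    rw [uIoc_of_le h13.le] at hmem
    have hτ3 : τ < 1/3 := lt_of_le_of_ne hmem.2 hτ
    have e1 : F τ = Real.sqrt (dd (3*x*τ) * ((3*x)^2)) := by
      simp only [hFdef, hβdef, hβ₁def, hγ₁def, if_pos hτ3.le, if_pos hτ3]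
      rw [show (1 - (1 + -(3*x)*τ)) = 3*x*τ by ring]
      congr 1
      ring
    rw [e1, Real.sqrt_mul (hdnn _ ⟨by nlinarith [hmem.1], by nlinarith [hmem.1]⟩),
      Real.sqrt_sq (by positivity)]
  -- piece 2
  have hfd : (fdeg fhat Q (1-x))^2 = fhat (1-x) / Q x := by
    unfold fdeg
    rw [show (1:ℝ)-(1-x) = x by ring,
      Real.sq_sqrt (div_nonneg (hfnn _ ⟨by linarith, by linarith⟩) (hQnn _ ⟨hx0.le, hx1⟩))]
  have hKarg : 0 ≤ c * fhat (1-x) * (dd x / Q x) :=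
    mul_nonneg (mul_nonneg hc.le (hfnn _ ⟨by linarith, by linarith⟩))
      (div_nonneg (hdnn _ ⟨hx0.le, hx1⟩) (hQnn _ ⟨hx0.le, hx1⟩))
  have hF2 : ∀ᵐ τ : ℝ ∂volume, τ ∈ Set.uIoc (1/3:ℝ) (2/3) → F τ = K * (3*s) := by
    filter_upwards [hne23] with τ hτ hmem
    rw [uIoc_of_le h23.le] at hmem
    have hτ2 : τ < 2/3 := lt_of_le_of_ne hmem.2 hτ
    have hτ1 : ¬ τ ≤ 1/3 := not_le.2 hmem.1
    have hτ1' : ¬ τ < 1/3 := not_lt.2 hmem.1.le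
    have hβτ : β τ = 1 - x := by
      simp only [hβdef, if_neg hτ1, if_pos hτ2.le]; ring
    have e1 : F τ = Real.sqrt (dd x * (c * (fhat (1-x) / Q x) * (3*s)^2 + 0^2)) := by
      simp only [hFdef, hβτ, hγ₁def, hβ₁def, if_neg hτ1', if_pos hτ2, hfd]
      rw [show (1 - (1 - x)) = x by ring]
    rw [e1, hKdef, show K * (3*s) = Real.sqrt (c * fhat (1-x) * (dd x / Q x)) * Real.sqrt ((3*s)^2)
        by rw [Real.sqrt_sq (by positivity)],
      ← Real.sqrt_mul hKarg]
    congr 1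
    ring
  -- piece 3
  have hF3 : ∀ τ : ℝ, τ ∈ Set.uIoc (2/3:ℝ) 1 → F τ = Real.sqrt (dd (3*x*(1-τ))) * (3*x) := by
    intro τ hmem
    rw [uIoc_of_le (by norm_num)] at hmem
    have hτ2 : ¬ τ ≤ 2/3 := not_le.2 hmem.1
    have hτ1 : ¬ τ ≤ 1/3 := fun h => hτ2 (by linarith)
    have hτ2' : ¬ τ < 2/3 := not_lt.2 hmem.1.le
    have hτ1' : ¬ τ < 1/3 := fun h => hτ2' (by linarith)
    have e1 : F τ = Real.sqrt (dd (3*x*(1-τ)) * ((3*x)^2)) := by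
      simp only [hFdef, hβdef, hβ₁def, hγ₁def, if_neg hτ1, if_neg hτ2, if_neg hτ1', if_neg hτ2']
      rw [show (1 - (1 + -(3*x)*(1/3) + 0*(2/3-1/3) + 3*x*(τ-2/3))) = 3*x*(1-τ) by ring]
      congr 1
      ring
    rw [e1, Real.sqrt_mul (hdnn _ ⟨by nlinarith [hmem.1, hmem.2], by nlinarith [hmem.1, hmem.2]⟩),
      Real.sqrt_sq (by positivity)]
  -- integrability of the pieces
  have hg1c : ContinuousOn (fun τ : ℝ => Real.sqrt (dd (3*x*τ)) * (3*x)) (Icc 0 (1/3)) := by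
    refine ContinuousOn.mul ?_ continuousOn_const
    apply Real.continuous_sqrt.comp_continuousOn
    exact hdc.comp ((continuous_const.mul continuous_id).continuousOn)
      (fun τ hτ => ⟨by nlinarith [hτ.1, hτ.2], by nlinarith [hτ.1, hτ.2]⟩)
  have hg3c : ContinuousOn (fun τ : ℝ => Real.sqrt (dd (3*x*(1-τ))) * (3*x)) (Icc (2/3) 1) := by
    refine ContinuousOn.mul ?_ continuousOn_const
    apply Real.continuous_sqrt.comp_continuousOn
    exact hdc.comp ((continuous_const.mul (continuous_const.sub continuous_id)).continuousOn)
      (fun τ hτ => ⟨by nlinarith [hτ.1, hτ.2], by nlinarith [hτ.1, hτ.2]⟩)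
  have hg1i : IntervalIntegrable (fun τ : ℝ => Real.sqrt (dd (3*x*τ)) * (3*x)) volume 0 (1/3) :=
    ContinuousOn.intervalIntegrable (by rw [uIcc_of_le h13.le]; exact hg1c)
  have hg3i : IntervalIntegrable (fun τ : ℝ => Real.sqrt (dd (3*x*(1-τ))) * (3*x))
      volume (2/3) 1 :=
    ContinuousOn.intervalIntegrable (by rw [uIcc_of_le (by norm_num : (2/3:ℝ) ≤ 1)]; exact hg3c)
  have hFi1 : IntervalIntegrable F volume 0 (1/3) := by
    rw [intervalIntegrable_iff] at hg1i ⊢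
    exact hg1i.congr ((ae_restrict_iff' measurableSet_uIoc).2 (hF1.mono fun τ h hm => (h hm).symm))
  have hFi2 : IntervalIntegrable F volume (1/3) (2/3) := by
    have hco : IntervalIntegrable (fun _ : ℝ => K*(3*s)) volume (1/3) (2/3) :=
      intervalIntegrable_const
    rw [intervalIntegrable_iff] at hco ⊢
    exact hco.congr ((ae_restrict_iff' measurableSet_uIoc).2 (hF2.mono fun τ h hm => (h hm).symm))
  have hFi3 : IntervalIntegrable F volume (2/3) 1 := by
    rw [intervalIntegrable_iff] at hg3i ⊢
    exact hg3i.congr ((ae_restrict_iff' measurableSet_uIoc).2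
      (ae_of_all _ fun τ hm => (hF3 τ hm).symm))
  -- the three integrals
  have E1 : (∫ t in (0:ℝ)..(1/3), F t) = I := by
    rw [intervalIntegral.integral_congr_ae hF1, intervalIntegral.integral_mul_const,
      integral_comp_mul_left (fun u => Real.sqrt (dd u)) (by positivity : (3*x) ≠ 0),
      mul_zero, show (3*x)*(1/3) = x by ring, smul_eq_mul, hIdef]
    field_simp
  have E2 : (∫ t in (1/3:ℝ)..(2/3), F t) = K * s := by
    rw [intervalIntegral.integral_congr_ae hF2, intervalIntegral.integral_const, smul_eq_mul,
      show ((2:ℝ)/3 - 1/3) = 1/3 by norm_num]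
    ring
  have E3 : (∫ t in (2/3:ℝ)..1, F t) = I := by
    rw [intervalIntegral.integral_congr_ae (ae_of_all _ hF3),
      intervalIntegral.integral_mul_const,
      integral_comp_sub_left (fun u => Real.sqrt (dd (3*x*u))) 1]
    norm_num
    rw [integral_comp_mul_left (fun u => Real.sqrt (dd u)) (by positivity : (3*x) ≠ 0),
      mul_zero, show (3*x)*(1/3) = x by ring, smul_eq_mul, hIdef]
    field_simp
  have hsplit : (∫ t in (0:ℝ)..1, F t) = I + K*s + I := by
    have h12 := integral_add_adjacent_intervals hFi2 hFi3
    have h012 := integral_add_adjacent_intervals hFi1 (hFi2.trans hFi3)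
    rw [E2, E3] at h12
    rw [E1] at h012
    rw [← h012, ← h12]
    ring
  have hmem : (I + K*s + I) ∈ {y : ℝ | ∃ γ γ₁ β β₁ : ℝ → ℝ,
      H1on01 γ γ₁ ∧ H1on01 β β₁ ∧ γ 0 = 0 ∧ γ 1 = s ∧
      (∀ x ∈ Icc (0:ℝ) 1, β x ∈ Icc (0:ℝ) 1) ∧ β 0 = 1 ∧ β 1 = 1 ∧
      y = ∫ x in (0:ℝ)..1,
        Real.sqrt (dd (1 - β x) * (c * (fdeg fhat Q (β x))^2 * (γ₁ x)^2 + (β₁ x)^2))} :=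
    ⟨γ, γ₁, β, β₁, hγH1, hβH1, hγ0, hγ1, hβmem, hβ0, hβ1, hsplit.symm⟩
  have hfin := csInf_le (surfG_bddBelow dd fhat Q c s) hmem
  unfold surfG
  refine le_trans hfin ?_
  rw [psi_diff dd hdc ⟨hx0.le, hx1⟩, hIdef]
  linarith

/-- In the case `σ̄ = ∞`: `g ≤ ĝ` on `[0,∞)`, and `ĝ` is concave, non-decreasing,
continuous, bounded by `2Ψ(1)`, with `ĝ(s)/s → ∞` as `s → 0⁺`. -/
theorem stmt14 (dd fhat Q : ℝ → ℝ) (c : ℝ) (hc : 0 < c)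
    (hfc : ContinuousOn fhat (Icc 0 1)) (hQc : ContinuousOn Q (Icc 0 1))
    (hdc : ContinuousOn dd (Icc 0 1))
    (hfnn : ∀ t ∈ Icc (0:ℝ) 1, 0 ≤ fhat t) (hQnn : ∀ t ∈ Icc (0:ℝ) 1, 0 ≤ Q t)
    (hdnn : ∀ t ∈ Icc (0:ℝ) 1, 0 ≤ dd t) (hf1 : fhat 1 = 1)
    (hfz : ∀ t ∈ Icc (0:ℝ) 1, (fhat t = 0 ↔ t = 0))
    (hQz : ∀ t ∈ Icc (0:ℝ) 1, (Q t = 0 ↔ t = 0))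
    (hdz : ∀ t ∈ Icc (0:ℝ) 1, (dd t = 0 ↔ t = 0))
    (hσ : Tendsto (fun t => Real.sqrt (dd t / Q t)) (𝓝[>] (0:ℝ)) atTop) :
    (∀ s ≥ (0:ℝ), surfG dd fhat Q c s ≤ ghat dd fhat Q c s) ∧
    ConcaveOn ℝ (Ici 0) (ghat dd fhat Q c) ∧
    MonotoneOn (ghat dd fhat Q c) (Ici 0) ∧
    ContinuousOn (ghat dd fhat Q c) (Ici 0) ∧
    (∀ s ≥ (0:ℝ), ghat dd fhat Q c s ≤ 2 * Psi dd 1) ∧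
    Tendsto (fun s => ghat dd fhat Q c s / s) (𝓝[>] (0:ℝ)) atTop := by
  set A : ℝ → ℝ := fun x => 2*(Psi dd 1 - Psi dd (1-x)) with hAdef
  set B : ℝ → ℝ := fun x => Real.sqrt (c * fhat (1-x) * (dd x / Q x)) with hBdef
  have hsq : ContinuousOn (fun u : ℝ => Real.sqrt (dd u)) (Icc 0 1) :=
    Real.continuous_sqrt.comp_continuousOn hdc
  have hii : ∀ p q : ℝ, 0 ≤ p → q ≤ 1 → p ≤ q →
      IntervalIntegrable (fun u : ℝ => Real.sqrt (dd u)) volume p q := by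
    intro p q hp hq hpq
    apply ContinuousOn.intervalIntegrable
    rw [uIcc_of_le hpq]
    exact hsq.mono (Icc_subset_Icc hp hq)
  have hA : ∀ x ∈ Ioc (0:ℝ) 1, A x = 2 * ∫ u in (0:ℝ)..x, Real.sqrt (dd u) := by
    intro x hx
    rw [hAdef]
    simp only
    rw [psi_diff dd hdc ⟨hx.1.le, hx.2⟩]
  have hAnn : ∀ x ∈ Ioc (0:ℝ) 1, 0 ≤ A x := by
    intro x hx
    rw [hA x hx]
    have h0 : (0:ℝ) ≤ ∫ u in (0:ℝ)..x, Real.sqrt (dd u) :=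
      intervalIntegral.integral_nonneg hx.1.le (fun u _ => Real.sqrt_nonneg (dd u))
    linarith
  have hBnn : ∀ x : ℝ, 0 ≤ B x := fun x => Real.sqrt_nonneg _
  have hSdef : ∀ s : ℝ, ghat dd fhat Q c s =
      sInf {y : ℝ | ∃ x ∈ Ioc (0:ℝ) 1, y = A x + B x * s} := by
    intro s; rfl
  have hSne : ∀ s : ℝ, {y : ℝ | ∃ x ∈ Ioc (0:ℝ) 1, y = A x + B x * s}.Nonempty :=
    fun s => ⟨A 1 + B 1 * s, 1, ⟨one_pos, le_rfl⟩, rfl⟩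
  have hSbdd : ∀ s : ℝ, 0 ≤ s →
      BddBelow {y : ℝ | ∃ x ∈ Ioc (0:ℝ) 1, y = A x + B x * s} := by
    intro s hs
    refine ⟨0, fun y hy => ?_⟩
    obtain ⟨x, hx, rfl⟩ := hy
    exact add_nonneg (hAnn x hx) (mul_nonneg (hBnn x) hs)
  have hle : ∀ s : ℝ, 0 ≤ s → ∀ x ∈ Ioc (0:ℝ) 1, ghat dd fhat Q c s ≤ A x + B x * s := by
    intro s hs x hx
    rw [hSdef]
    exact csInf_le (hSbdd s hs) ⟨x, hx, rfl⟩
  have hge0 : ∀ s : ℝ, 0 ≤ s → 0 ≤ ghat dd fhat Q c s := by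
    intro s hs
    rw [hSdef]
    refine le_csInf (hSne s) (fun y hy => ?_)
    obtain ⟨x, hx, rfl⟩ := hy
    exact add_nonneg (hAnn x hx) (mul_nonneg (hBnn x) hs)
  -- part 1
  have part1 : ∀ s ≥ (0:ℝ), surfG dd fhat Q c s ≤ ghat dd fhat Q c s := by
    intro s hs
    rw [hSdef]
    refine le_csInf (hSne s) (fun y hy => ?_)
    obtain ⟨x, hx, rfl⟩ := hy
    exact competitor dd fhat Q c hc hdc hfnn hQnn hdnn hs hx.1 hx.2
  -- part 2: concavity
  have part2 : ConcaveOn ℝ (Ici 0) (ghat dd fhat Q c) := by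
    refine ⟨convex_Ici 0, fun s hs t ht a b ha hb hab => ?_⟩
    simp only [smul_eq_mul]
    rw [hSdef (a * s + b * t)]
    refine le_csInf (hSne _) (fun y hy => ?_)
    obtain ⟨x, hx, rfl⟩ := hy
    have h1 : a * ghat dd fhat Q c s ≤ a * (A x + B x * s) :=
      mul_le_mul_of_nonneg_left (hle s hs x hx) ha
    have h2 : b * ghat dd fhat Q c t ≤ b * (A x + B x * t) :=
      mul_le_mul_of_nonneg_left (hle t ht x hx) hb
    have h3 : a * (A x + B x * s) + b * (A x + B x * t) = A x + B x * (a * s + b * t) := by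
      have : a * (A x + B x * s) + b * (A x + B x * t)
          = (a + b) * A x + B x * (a * s + b * t) := by ring
      rw [this, hab, one_mul]
    linarith
  -- part 3: monotone
  have part3 : MonotoneOn (ghat dd fhat Q c) (Ici 0) := by
    intro s hs t ht hst
    rw [hSdef t]
    refine le_csInf (hSne t) (fun y hy => ?_)
    obtain ⟨x, hx, rfl⟩ := hy
    calc ghat dd fhat Q c s ≤ A x + B x * s := hle s hs x hx
      _ ≤ A x + B x * t := by
          have := mul_le_mul_of_nonneg_left hst (hBnn x)
          linarith
  -- bound on A
  obtain ⟨M, hM⟩ := isCompact_Icc.exists_bound_of_continuousOn hsq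
  set M' : ℝ := max M 0 with hM'def
  have hM'nn : 0 ≤ M' := le_max_right _ _
  have hM' : ∀ u ∈ Icc (0:ℝ) 1, Real.sqrt (dd u) ≤ M' := by
    intro u hu
    calc Real.sqrt (dd u) ≤ ‖Real.sqrt (dd u)‖ := le_abs_self _
      _ ≤ M := hM u hu
      _ ≤ M' := le_max_left _ _
  have hAle : ∀ x ∈ Ioc (0:ℝ) 1, A x ≤ 2*(M'*x) := by
    intro x hx
    rw [hA x hx]
    have hle1 : (∫ u in (0:ℝ)..x, Real.sqrt (dd u)) ≤ ∫ _ in (0:ℝ)..x, M' := by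
      refine intervalIntegral.integral_mono_on hx.1.le (hii 0 x le_rfl hx.2 hx.1.le)
        intervalIntegrable_const (fun u hu => hM' u ⟨hu.1, le_trans hu.2 hx.2⟩)
    rw [intervalIntegral.integral_const, smul_eq_mul] at hle1
    nlinarith
  -- ghat 0 = 0
  have hghat0 : ghat dd fhat Q c 0 = 0 := by
    refine le_antisymm ?_ (hge0 0 le_rfl)
    refine le_of_forall_pos_le_add (fun ε hε => ?_)
    set x : ℝ := min 1 (ε/(2*M'+1)) with hxdef
    have hx0 : 0 < x := lt_min one_pos (by positivity)
    have hx1 : x ≤ 1 := min_le_left _ _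
    have hxε : x ≤ ε/(2*M'+1) := min_le_right _ _
    calc ghat dd fhat Q c 0 ≤ A x + B x * 0 := hle 0 le_rfl x ⟨hx0, hx1⟩
      _ = A x := by ring
      _ ≤ 2*(M'*x) := hAle x ⟨hx0, hx1⟩
      _ ≤ ε := by
          have hx' : x * (2*M'+1) ≤ ε := (le_div_iff₀ (by positivity)).1 hxε
          nlinarith [mul_nonneg hM'nn hx0.le, hx0.le]
      _ ≤ 0 + ε := by linarith
  -- part 4: continuity
  have hcwa0 : ContinuousWithinAt (ghat dd fhat Q c) (Ici 0) 0 := by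
    unfold ContinuousWithinAt
    rw [hghat0]
    refine tendsto_order.2 ⟨fun a' ha' => ?_, fun ε hε => ?_⟩
    · filter_upwards [self_mem_nhdsWithin] with s hs
      exact lt_of_lt_of_le ha' (hge0 s hs)
    · set x : ℝ := min 1 (ε/(16*M'+8)) with hxdef
      have hx0 : 0 < x := lt_min one_pos (by positivity)
      have hx1 : x ≤ 1 := min_le_left _ _
      have hxε : x ≤ ε/(16*M'+8) := min_le_right _ _
      have hAx : A x ≤ ε/4 := by
        refine le_trans (hAle x ⟨hx0, hx1⟩) ?_
        have hx' : x * (16*M'+8) ≤ ε := (le_div_iff₀ (by positivity)).1 hxε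
        nlinarith [mul_nonneg hM'nn hx0.le, hx0.le]
      set δ : ℝ := (ε/4)/(B x + 1) with hδdef
      have hδ0 : 0 < δ := by
        have := hBnn x
        positivity
      have hev : ∀ᶠ s in 𝓝[Ici (0:ℝ)] 0, s < δ :=
        Filter.Eventually.filter_mono nhdsWithin_le_nhds (eventually_lt_nhds hδ0)
      filter_upwards [self_mem_nhdsWithin, hev] with s hs hsδ
      have hBs : B x * s ≤ ε/4 := by
        have h1 : B x * s ≤ B x * δ := mul_le_mul_of_nonneg_left hsδ.le (hBnn x)
        have h2 : B x * δ ≤ ε/4 := by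
          rw [hδdef]
          rw [mul_div_assoc']
          rw [div_le_iff₀ (by positivity : (0:ℝ) < B x + 1)]
          nlinarith [hBnn x, hε.le]
        linarith
      calc ghat dd fhat Q c s ≤ A x + B x * s := hle s hs x ⟨hx0, hx1⟩
        _ ≤ ε/4 + ε/4 := add_le_add hAx hBs
        _ < ε := by linarith
  have part4 : ContinuousOn (ghat dd fhat Q c) (Ici 0) := by
    intro a ha
    rcases eq_or_lt_of_le (show (0:ℝ) ≤ a from ha) with h | h
    · rw [← h]; exact hcwa0
    · have hconc' : ConcaveOn ℝ (Ioi (0:ℝ)) (ghat dd fhat Q c) :=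
        part2.subset Ioi_subset_Ici_self (convex_Ioi 0)
      exact ((hconc'.continuousOn isOpen_Ioi).continuousAt (Ioi_mem_nhds h)).continuousWithinAt
  -- part 5
  have part5 : ∀ s ≥ (0:ℝ), ghat dd fhat Q c s ≤ 2 * Psi dd 1 := by
    intro s hs
    have h1 : A 1 + B 1 * s = 2 * Psi dd 1 := by
      have hf0 : fhat 0 = 0 := (hfz 0 ⟨le_rfl, zero_le_one⟩).2 rfl
      have hB1 : B 1 = 0 := by
        rw [hBdef]
        simp only
        rw [show (1:ℝ)-1 = 0 by ring, hf0]
        simp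
      have hA1 : A 1 = 2 * Psi dd 1 := by
        rw [hAdef]
        simp only
        rw [show (1:ℝ)-1 = 0 by ring]
        unfold Psi
        rw [intervalIntegral.integral_same]
        ring
      rw [hB1, hA1]; ring
    calc ghat dd fhat Q c s ≤ A 1 + B 1 * s := hle s hs 1 ⟨one_pos, le_rfl⟩
      _ = 2 * Psi dd 1 := h1
  -- part 6
  have part6 : Tendsto (fun s => ghat dd fhat Q c s / s) (𝓝[>] (0:ℝ)) atTop := by
    have key : ∀ M : ℝ, 0 < M → ∀ᶠ s in 𝓝[>] (0:ℝ), M ≤ ghat dd fhat Q c s / s := by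
      intro M hM0
      -- fhat (1-x) eventually ≥ 1/2
      have hIoo : Ioo (0:ℝ) 1 ∈ 𝓝[>] (0:ℝ) :=
        Ioo_mem_nhdsGT_of_mem ⟨le_rfl, one_pos⟩
      have htend : Tendsto (fun x : ℝ => fhat (1-x)) (𝓝[>] (0:ℝ)) (𝓝 1) := by
        have h1 : ContinuousWithinAt fhat (Icc 0 1) 1 := hfc 1 ⟨zero_le_one, le_rfl⟩
        have h2 : Tendsto (fun x : ℝ => 1 - x) (𝓝[>] (0:ℝ)) (𝓝[Icc (0:ℝ) 1] 1) := by
          rw [tendsto_nhdsWithin_iff]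
          constructor
          · have : Tendsto (fun x : ℝ => 1 - x) (𝓝 (0:ℝ)) (𝓝 (1-0)) :=
              (continuous_const.sub continuous_id).tendsto 0
            rw [sub_zero] at this
            exact this.mono_left nhdsWithin_le_nhds
          · filter_upwards [hIoo] with x hx
            exact ⟨by linarith [hx.2], by linarith [hx.1]⟩
        have := h1.tendsto.comp h2
        rwa [hf1] at this
      have hfev : ∀ᶠ x in 𝓝[>] (0:ℝ), (1:ℝ)/2 ≤ fhat (1-x) :=
        htend.eventually (eventually_ge_nhds (by norm_num))
      -- B tends to infinity
      have hBev : ∀ᶠ x in 𝓝[>] (0:ℝ), M ≤ B x := by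
        have hlow : Tendsto (fun x : ℝ => Real.sqrt (c/2) * Real.sqrt (dd x / Q x))
            (𝓝[>] (0:ℝ)) atTop :=
          Tendsto.const_mul_atTop (by positivity) hσ
        refine (hlow.eventually_ge_atTop M).mp ?_
        filter_upwards [hfev, hIoo] with x hxf hxI hxlow
        have hq : 0 ≤ dd x / Q x :=
          div_nonneg (hdnn x ⟨hxI.1.le, hxI.2.le⟩) (hQnn x ⟨hxI.1.le, hxI.2.le⟩)
        have h1 : Real.sqrt (c/2) * Real.sqrt (dd x / Q x)
            = Real.sqrt ((c/2) * (dd x / Q x)) := (Real.sqrt_mul (by positivity) _).symm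
        have h2 : (c/2) * (dd x / Q x) ≤ c * fhat (1-x) * (dd x / Q x) := by
          have h3 := mul_nonneg (mul_nonneg hc.le hq)
            (show (0:ℝ) ≤ fhat (1-x) - 1/2 by linarith)
          nlinarith [h3]
        calc M ≤ Real.sqrt (c/2) * Real.sqrt (dd x / Q x) := hxlow
          _ = Real.sqrt ((c/2) * (dd x / Q x)) := h1
          _ ≤ B x := Real.sqrt_le_sqrt h2
      have hcomb : {x : ℝ | M ≤ B x ∧ x ∈ Ioo (0:ℝ) 1} ∈ 𝓝[>] (0:ℝ) := by
        filter_upwards [hBev, hIoo] with x h1 h2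
        exact ⟨h1, h2⟩
      rw [mem_nhdsGT_iff_exists_Ioc_subset] at hcomb
      obtain ⟨x₀, hx₀pos, hsub⟩ := hcomb
      set x₁ : ℝ := min x₀ 1 with hx₁def
      have hx₁0 : 0 < x₁ := lt_min hx₀pos one_pos
      have hx₁1 : x₁ ≤ 1 := min_le_right _ _
      have hsub' : ∀ x : ℝ, 0 < x → x ≤ x₁ → M ≤ B x :=
        fun x h1 h2 => (hsub ⟨h1, le_trans h2 (min_le_left _ _)⟩).1
      set δ : ℝ := 2 * ∫ u in (0:ℝ)..x₁, Real.sqrt (dd u) with hδdef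
      have hδ0 : 0 < δ := by
        rw [hδdef]
        have hpos : 0 < ∫ u in (0:ℝ)..x₁, Real.sqrt (dd u) := by
          refine intervalIntegral.intervalIntegral_pos_of_pos_on
            (hii 0 x₁ le_rfl hx₁1 hx₁0.le) (fun u hu => ?_) hx₁0
          refine Real.sqrt_pos.2 ?_
          have hnn := hdnn u ⟨hu.1.le, le_trans hu.2.le hx₁1⟩
          have hne : dd u ≠ 0 := fun h =>
            (ne_of_gt hu.1) ((hdz u ⟨hu.1.le, le_trans hu.2.le hx₁1⟩).1 h)
          exact lt_of_le_of_ne hnn (Ne.symm hne)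
        linarith
      filter_upwards [Ioo_mem_nhdsGT_of_mem
        (show (0:ℝ) ∈ Ico 0 (δ/M) from ⟨le_rfl, by positivity⟩)] with s hsmem
      obtain ⟨hs0, hsδ⟩ := hsmem
      rw [le_div_iff₀ hs0]
      rw [hSdef]
      refine le_csInf (hSne s) (fun y hy => ?_)
      obtain ⟨x, hx, rfl⟩ := hy
      rcases le_or_gt x x₁ with hcase | hcase
      · have hBx : M ≤ B x := hsub' x hx.1 hcase
        have : M * s ≤ B x * s := mul_le_mul_of_nonneg_right hBx hs0.le
        have := hAnn x hx
        linarith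
      · have hAx : δ ≤ A x := by
          rw [hA x hx, hδdef]
          have hsplit := integral_add_adjacent_intervals (hii 0 x₁ le_rfl hx₁1 hx₁0.le)
            (hii x₁ x hx₁0.le hx.2 hcase.le)
          have h2 : 0 ≤ ∫ u in x₁..x, Real.sqrt (dd u) :=
            intervalIntegral.integral_nonneg hcase.le (fun u _ => Real.sqrt_nonneg _)
          nlinarith
        have hMs : M * s < δ := by
          rw [lt_div_iff₀ hM0] at hsδ
          linarith [mul_comm M s]
        have hBs : 0 ≤ B x * s := mul_nonneg (hBnn x) hs0.le
        linarith
    rw [tendsto_atTop]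
    intro M
    filter_upwards [key (max M 1) (lt_of_lt_of_le one_pos (le_max_right _ _))] with s hs
    exact le_trans (le_max_left _ _) hs
  exact ⟨part1, part2, part3, part4, part5, part6⟩
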